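/- Let r > 0 and let x, y ∈ ℝ² (with the Euclidean norm) satisfy ‖x − y‖ = ρ with 0 ≤ ρ ≤ r. Then the area (2-dimensional Lebesgue measure) of the intersection of the closed balls of radius r centered at x and at y equals 2r² · arccos(ρ/(2r)) − (ρ/2) · √(4r² − ρ²). -/

import Mathlib

set_option maxHeartbeats 1000000

open MeasureTheory

section AuxLens
open Real

lemma sqrt_integral (r a : ℝ) (hr : 0 < r) (ha : -r ≤ a) (har : a ≤ r) :
    ∫ u in a..r, Real.sqrt (r^2 - u^2)
      = (r * Real.sqrt (r^2 - r^2) + r^2 * Real.arcsin (r/r)) / 2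
        - (a * Real.sqrt (r^2 - a^2) + r^2 * Real.arcsin (a/r)) / 2 := by
  set F : ℝ → ℝ := fun u => (u * Real.sqrt (r^2 - u^2) + r^2 * Real.arcsin (u/r)) / 2 with hF
  have hcont : ContinuousOn F (Set.Icc a r) := by
    apply Continuous.continuousOn
    have : Continuous fun u : ℝ => Real.arcsin (u / r) :=
      Real.continuous_arcsin.comp (continuous_id.div_const r)
    continuity
  have hderiv : ∀ u ∈ Set.Ioo a r, HasDerivWithinAt F (Real.sqrt (r^2 - u^2)) (Set.Ioi u) u := by
    intro u hu
    have hur : -r < u := lt_of_le_of_lt ha hu.1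
    have hur2 : u < r := hu.2
    have hpos : 0 < r^2 - u^2 := by nlinarith
    set s := Real.sqrt (r^2 - u^2) with hs
    have hspos : 0 < s := Real.sqrt_pos.2 hpos
    have hssq : s^2 = r^2 - u^2 := Real.sq_sqrt hpos.le
    have h1 : HasDerivAt (fun u : ℝ => r^2 - u^2) (-2*u) u := by
      simpa using ((hasDerivAt_pow 2 u).const_sub (r^2))
    have h2 : HasDerivAt (fun u : ℝ => Real.sqrt (r^2 - u^2)) (-2*u / (2*s)) u := by
      have := (Real.hasDerivAt_sqrt hpos.ne').comp u h1
      rw [show -2*u/(2*s) = 1/(2*s) * (-2*u) by ring]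
      exact this
    have h3 : HasDerivAt (fun u : ℝ => u * Real.sqrt (r^2 - u^2))
        (1 * s + u * (-2*u / (2*s))) u := (hasDerivAt_id u).mul h2
    have hne1 : u / r ≠ -1 := by
      intro h
      have : u = -r := by field_simp at h; linarith
      linarith
    have hne2 : u / r ≠ 1 := by
      intro h
      have : u = r := by field_simp at h; exact h
      linarith
    have h4 : HasDerivAt (fun u : ℝ => Real.arcsin (u / r))
        (1 / Real.sqrt (1 - (u/r)^2) * (1/r)) u :=
      (Real.hasDerivAt_arcsin hne1 hne2).comp (h₂ := Real.arcsin) u ((hasDerivAt_id u).div_const r)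
    have hsq : Real.sqrt (1 - (u/r)^2) = s / r := by
      rw [show (1 : ℝ) - (u/r)^2 = (r^2 - u^2)/r^2 by field_simp,
        Real.sqrt_div hpos.le, Real.sqrt_sq hr.le]
    rw [hsq] at h4
    have hFd : HasDerivAt F
        ((1 * s + u * (-2*u / (2*s)) + r^2 * (1 / (s/r) * (1/r))) / 2) u :=
      ((h3.add (h4.const_mul (r^2))).div_const 2)
    have : (1 * s + u * (-2*u / (2*s)) + r^2 * (1 / (s/r) * (1/r))) / 2 = s := by
      have hr0 := hr.ne'
      have hs0 := hspos.ne'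
      field_simp
      linear_combination (-1) * hssq
    rw [this] at hFd
    exact hFd.hasDerivWithinAt
  have hint : IntervalIntegrable (fun u => Real.sqrt (r^2 - u^2)) volume a r := by
    apply Continuous.intervalIntegrable
    continuity
  have := intervalIntegral.integral_eq_sub_of_hasDeriv_right_of_le har hcont hderiv hint
  rw [this]


lemma lens_integral (r ρ : ℝ) (hr : 0 < r) (hρ0 : 0 ≤ ρ) (hρr : ρ ≤ r) :
    ∫ u in (ρ - r)..r, 2 * Real.sqrt (min (r^2 - u^2) (r^2 - (u - ρ)^2))
      = 2*r^2 * Real.arccos (ρ/(2*r)) - ρ/2 * Real.sqrt (4*r^2 - ρ^2) := by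
  have hcont : Continuous fun u : ℝ => 2 * Real.sqrt (min (r^2 - u^2) (r^2 - (u - ρ)^2)) := by
    apply Continuous.mul continuous_const
    apply Real.continuous_sqrt.comp
    exact Continuous.min (by continuity) (by continuity)
  have hint : ∀ a b : ℝ, IntervalIntegrable
      (fun u : ℝ => 2 * Real.sqrt (min (r^2 - u^2) (r^2 - (u - ρ)^2))) volume a b :=
    fun a b => hcont.intervalIntegrable a b
  have hsplit := intervalIntegral.integral_add_adjacent_intervals
    (hint (ρ - r) (ρ/2)) (hint (ρ/2) r)
  rw [← hsplit]
  have hI2 : (∫ u in (ρ/2)..r, 2 * Real.sqrt (min (r^2 - u^2) (r^2 - (u - ρ)^2)))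
      = ∫ u in (ρ/2)..r, 2 * Real.sqrt (r^2 - u^2) := by
    apply intervalIntegral.integral_congr
    intro u hu
    rw [Set.uIcc_of_le (by linarith)] at hu
    have : min (r^2 - u^2) (r^2 - (u - ρ)^2) = r^2 - u^2 := by
      apply min_eq_left
      nlinarith [hu.1, hu.2]
    simp only [this]
  have hI1 : (∫ u in (ρ - r)..(ρ/2), 2 * Real.sqrt (min (r^2 - u^2) (r^2 - (u - ρ)^2)))
      = ∫ u in (ρ/2)..r, 2 * Real.sqrt (r^2 - u^2) := by
    have e1 : (∫ u in (ρ - r)..(ρ/2), 2 * Real.sqrt (min (r^2 - u^2) (r^2 - (u - ρ)^2)))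
        = ∫ u in (ρ - r)..(ρ/2), 2 * Real.sqrt (r^2 - (u - ρ)^2) := by
      apply intervalIntegral.integral_congr
      intro u hu
      rw [Set.uIcc_of_le (by linarith)] at hu
      have : min (r^2 - u^2) (r^2 - (u - ρ)^2) = r^2 - (u - ρ)^2 := by
        apply min_eq_right
        nlinarith [hu.1, hu.2]
      simp only [this]
    rw [e1]
    have e2 := intervalIntegral.integral_comp_sub_right
      (a := ρ - r) (b := ρ/2) (fun t : ℝ => 2 * Real.sqrt (r^2 - t^2)) ρ
    rw [e2]
    have e3 : (∫ t in (ρ - r - ρ)..(ρ/2 - ρ), 2 * Real.sqrt (r^2 - t^2))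
        = ∫ t in (-r)..(-(ρ/2)), 2 * Real.sqrt (r^2 - t^2) := by
      rw [show ρ - r - ρ = -r by ring, show ρ/2 - ρ = -(ρ/2) by ring]
    rw [e3]
    have e4 := intervalIntegral.integral_comp_neg (a := ρ/2) (b := r)
      (fun t : ℝ => 2 * Real.sqrt (r^2 - t^2))
    simp only [neg_sq] at e4 ⊢
    rw [← e4]
  rw [hI1, hI2]
  have hhalf : (∫ u in (ρ/2)..r, 2 * Real.sqrt (r^2 - u^2))
      = 2 * ∫ u in (ρ/2)..r, Real.sqrt (r^2 - u^2) := by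
    rw [← intervalIntegral.integral_const_mul]
  rw [hhalf, sqrt_integral r (ρ/2) hr (by linarith) (by linarith)]
  have h0 : Real.sqrt (r^2 - r^2) = 0 := by simp
  have h1 : Real.arcsin (r/r) = π/2 := by
    rw [div_self hr.ne', Real.arcsin_one]
  have h2 : Real.sqrt (r^2 - (ρ/2)^2) = Real.sqrt (4*r^2 - ρ^2) / 2 := by
    rw [show r^2 - (ρ/2)^2 = (4*r^2 - ρ^2)/4 by ring,
      Real.sqrt_div (by nlinarith : (0:ℝ) ≤ 4*r^2 - ρ^2),
      show Real.sqrt 4 = 2 by rw [show (4:ℝ) = 2^2 by norm_num, Real.sqrt_sq (by norm_num)]]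
  have h3 : (ρ/2)/r = ρ/(2*r) := by ring
  rw [h0, h1, h2, h3, Real.arccos_eq_pi_div_two_sub_arcsin]
  ring

noncomputable def psi2 : EuclideanSpace ℝ (Fin 2) ≃ᵐ ℝ × ℝ :=
  (MeasurableEquiv.toLp 2 (Fin 2 → ℝ)).symm.trans
    (MeasurableEquiv.piFinTwo (fun _ : Fin 2 => ℝ))

lemma psi2_apply (z : EuclideanSpace ℝ (Fin 2)) : psi2 z = (z 0, z 1) := rfl

lemma psi2_mp : MeasurePreserving psi2 volume volume :=
  (volume_preserving_piFinTwo (fun _ : Fin 2 => ℝ)).comp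
    (EuclideanSpace.volume_preserving_symm_measurableEquiv_toLp (Fin 2))

lemma ball_mem_iff (c : EuclideanSpace ℝ (Fin 2)) (r : ℝ) (hr : 0 ≤ r)
    (z : EuclideanSpace ℝ (Fin 2)) :
    z ∈ Metric.closedBall c r ↔ (z 0 - c 0)^2 + (z 1 - c 1)^2 ≤ r^2 := by
  rw [Metric.mem_closedBall, EuclideanSpace.dist_eq, Fin.sum_univ_two,
    Real.dist_eq, Real.dist_eq, sq_abs, sq_abs, Real.sqrt_le_left hr]

lemma volume_lens (r ρ : ℝ) (hr : 0 < r) (hρ0 : 0 ≤ ρ) (hρr : ρ ≤ r) :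
    volume (Metric.closedBall (EuclideanSpace.single (0 : Fin 2) ρ) r
        ∩ Metric.closedBall (0 : EuclideanSpace ℝ (Fin 2)) r)
      = ENNReal.ofReal (∫ u in (ρ - r)..r,
          2 * Real.sqrt (min (r^2 - u^2) (r^2 - (u - ρ)^2))) := by
  classical
  set S : Set (ℝ × ℝ) := {p | (p.1 - ρ)^2 + p.2^2 ≤ r^2 ∧ p.1^2 + p.2^2 ≤ r^2} with hS
  have hScl : IsClosed S := by
    have c1 : Continuous fun p : ℝ × ℝ => (p.1 - ρ)^2 + p.2^2 := by fun_prop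
    have c2 : Continuous fun p : ℝ × ℝ => p.1^2 + p.2^2 := by fun_prop
    exact (isClosed_le c1 continuous_const).inter (isClosed_le c2 continuous_const)
  have hSmeas : MeasurableSet S := hScl.measurableSet
  have hpre : Metric.closedBall (EuclideanSpace.single (0 : Fin 2) ρ) r
      ∩ Metric.closedBall (0 : EuclideanSpace ℝ (Fin 2)) r = psi2 ⁻¹' S := by
    ext z
    simp only [Set.mem_inter_iff, Set.mem_preimage, psi2_apply, hS, Set.mem_setOf_eq]
    rw [ball_mem_iff _ _ hr.le, ball_mem_iff _ _ hr.le]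
    simp [EuclideanSpace.single_apply]
  rw [hpre, psi2_mp.measure_preimage hSmeas.nullMeasurableSet]
  have hprod : (volume : Measure (ℝ × ℝ)) = (volume : Measure ℝ).prod volume := by
    exact (Measure.volume_eq_prod ℝ ℝ)
  rw [hprod, Measure.prod_apply hSmeas]
  have hslice : ∀ u : ℝ, (Prod.mk u ⁻¹' S)
      = {v : ℝ | v^2 ≤ min (r^2 - u^2) (r^2 - (u - ρ)^2)} := by
    intro u
    ext v
    simp only [hS, Set.mem_preimage, Set.mem_setOf_eq, le_min_iff]
    constructor
    · rintro ⟨h1, h2⟩; exact ⟨by linarith, by linarith⟩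
    · rintro ⟨h1, h2⟩; exact ⟨by linarith, by linarith⟩
  have hvol : ∀ c : ℝ, volume {v : ℝ | v^2 ≤ c} = ENNReal.ofReal (2 * Real.sqrt c) := by
    intro c
    rcases le_or_gt 0 c with hc | hc
    · have : {v : ℝ | v^2 ≤ c} = Set.Icc (-Real.sqrt c) (Real.sqrt c) := by
        ext v
        simp only [Set.mem_setOf_eq, Set.mem_Icc]
        rw [← abs_le, ← Real.sqrt_sq_eq_abs, Real.sqrt_le_sqrt_iff hc]
      rw [this, Real.volume_Icc]
      congr 1
      ring
    · have : {v : ℝ | v^2 ≤ c} = (∅ : Set ℝ) := by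
        ext v
        simp only [Set.mem_setOf_eq, Set.mem_empty_iff_false, iff_false, not_le]
        nlinarith [sq_nonneg v]
      rw [this, measure_empty, Real.sqrt_eq_zero'.mpr (by linarith)]
      simp
  simp only [hslice, hvol]
  set f : ℝ → ℝ := fun u => 2 * Real.sqrt (min (r^2 - u^2) (r^2 - (u - ρ)^2)) with hf
  have hcont : Continuous f := by
    apply Continuous.mul continuous_const
    exact Real.continuous_sqrt.comp ((by fun_prop : Continuous fun u : ℝ => r^2 - u^2).min
      (by fun_prop : Continuous fun u : ℝ => r^2 - (u - ρ)^2))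
  have hsupp : Function.support f ⊆ Set.Ioc (ρ - r) r := by
    intro u hu
    simp only [hf, Function.mem_support] at hu
    have hm : 0 < min (r^2 - u^2) (r^2 - (u - ρ)^2) := by
      by_contra h
      push_neg at h
      rw [Real.sqrt_eq_zero'.mpr h, mul_zero] at hu
      exact hu rfl
    have h1 : 0 < r^2 - u^2 := lt_of_lt_of_le hm (min_le_left _ _)
    have h2 : 0 < r^2 - (u - ρ)^2 := lt_of_lt_of_le hm (min_le_right _ _)
    constructor
    · nlinarith
    · nlinarith
  have hcs : HasCompactSupport f :=
    HasCompactSupport.intro isCompact_Icc fun u hu =>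
      Function.notMem_support.mp fun hs => hu (Set.Ioc_subset_Icc_self (hsupp hs))
  have hintg : Integrable f := hcont.integrable_of_hasCompactSupport hcs
  have hnn : 0 ≤ᵐ[volume] f := Filter.Eventually.of_forall fun u => by
    simp only [hf]; positivity
  rw [← MeasureTheory.ofReal_integral_eq_lintegral_ofReal hintg hnn,
    ← intervalIntegral.integral_eq_integral_of_support_subset hsupp]

end AuxLens

/-- If `x, y ∈ ℝ²` (Euclidean norm) satisfy `‖x − y‖ = ρ` with `0 ≤ ρ ≤ r` and
`r > 0`, then the area of the intersection of the closed balls of radius `r`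
centered at `x` and at `y` equals
`2r² · arccos(ρ/(2r)) − (ρ/2) · √(4r² − ρ²)`. -/
theorem area_lens_intersection (r ρ : ℝ) (hr : 0 < r) (hρ0 : 0 ≤ ρ) (hρr : ρ ≤ r)
    (x y : EuclideanSpace ℝ (Fin 2)) (hxy : ‖x - y‖ = ρ) :
    volume (Metric.closedBall x r ∩ Metric.closedBall y r)
      = ENNReal.ofReal
          (2 * r ^ 2 * Real.arccos (ρ / (2 * r)) - ρ / 2 * Real.sqrt (4 * r ^ 2 - ρ ^ 2)) := by
  set a : EuclideanSpace ℝ (Fin 2) := x - y with ha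
  set b : EuclideanSpace ℝ (Fin 2) := EuclideanSpace.single (0 : Fin 2) ρ with hb
  have hnb : ‖b‖ = ρ := by
    rw [hb, EuclideanSpace.norm_single, Real.norm_eq_abs, abs_of_nonneg hρ0]
  -- step 1: translation
  have step1 : volume (Metric.closedBall x r ∩ Metric.closedBall y r)
      = volume (Metric.closedBall a r ∩ Metric.closedBall 0 r) := by
    have hpre : (fun z : EuclideanSpace ℝ (Fin 2) => y + z) ⁻¹'
        (Metric.closedBall x r ∩ Metric.closedBall y r)
        = Metric.closedBall a r ∩ Metric.closedBall 0 r := by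
      ext z
      simp only [Set.mem_preimage, Set.mem_inter_iff, Metric.mem_closedBall, dist_eq_norm]
      constructor
      · rintro ⟨h1, h2⟩
        refine ⟨?_, ?_⟩
        · rw [show z - a = y + z - x by rw [ha]; abel]; exact h1
        · rw [show z - 0 = y + z - y by abel]; exact h2
      · rintro ⟨h1, h2⟩
        refine ⟨?_, ?_⟩
        · rw [show y + z - x = z - a by rw [ha]; abel]; exact h1
        · rw [show y + z - y = z - 0 by abel]; exact h2
    rw [← hpre, measure_preimage_add volume y _]
  -- step 2: reflection
  have hab : ‖b‖ = ‖a‖ := by rw [hnb, ha, hxy]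
  obtain ⟨e, heb⟩ : ∃ e : EuclideanSpace ℝ (Fin 2) ≃ₗᵢ[ℝ] EuclideanSpace ℝ (Fin 2),
      e b = a := ⟨Submodule.reflection (ℝ ∙ (b - a))ᗮ, Submodule.reflection_sub hab⟩
  have step2 : volume (Metric.closedBall a r ∩ Metric.closedBall 0 r)
      = volume (Metric.closedBall b r ∩ Metric.closedBall 0 r) := by
    have hpre : (e : EuclideanSpace ℝ (Fin 2) → EuclideanSpace ℝ (Fin 2)) ⁻¹'
        (Metric.closedBall a r ∩ Metric.closedBall 0 r)
        = Metric.closedBall b r ∩ Metric.closedBall 0 r := by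
      ext z
      simp only [Set.mem_preimage, Set.mem_inter_iff, Metric.mem_closedBall]
      rw [← heb, ← map_zero e, e.dist_map, e.dist_map, map_zero]
    have hmp : MeasurePreserving (⇑e) (volume : Measure (EuclideanSpace ℝ (Fin 2))) volume :=
      e.measurePreserving
    have hms : NullMeasurableSet
        (Metric.closedBall a r ∩ Metric.closedBall (0 : EuclideanSpace ℝ (Fin 2)) r)
        (volume : Measure (EuclideanSpace ℝ (Fin 2))) :=
      ((Metric.isClosed_closedBall.inter Metric.isClosed_closedBall).measurableSet.nullMeasurableSet)
    rw [← hpre]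
    exact (hmp.measure_preimage hms).symm
  rw [step1, step2, hb, volume_lens r ρ hr hρ0 hρr, lens_integral r ρ hr hρ0 hρr]
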